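/- Let R be a one-dimensional Prüfer domain and X a nonempty closed subset of Max(R) in the inverse topology. Let T := ⋂_{P ∈ X} R_P. Then the maximal ideals of T are exactly the extensions PT for P ∈ X. -/

import Mathlib

open nonZeroDivisors

/-- The inverse topology on the maximal spectrum. -/
def invTop (R : Type*) [CommRing R] : TopologicalSpace (MaximalSpectrum R) :=
  .generateFrom {s | ∃ I : Ideal R, I.FG ∧ s = {M | I ≤ M.asIdeal}}

/-- Let `R` be a one-dimensional Prüfer domain (every nonzero prime is maximal and
every nonzero finitely generated ideal is invertible), `X` a nonempty closed subset
of `Max(R)` in the inverse topology, and `T = ⋂_{P ∈ X} R_P`, realized as the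
subalgebra of the fraction field `K` whose elements are those `x ∈ K` that lie in
`R_P` for every `P ∈ X`.  Then the maximal ideals of `T` are exactly the extensions
`P T` for `P ∈ X`. -/
theorem stmt11 {R : Type*} [CommRing R] [IsDomain R]
    (K : Type*) [Field K] [Algebra R K] [IsFractionRing R K]
    (hdim : ∀ P : Ideal R, P.IsPrime → P ≠ ⊥ → P.IsMaximal)
    (hpruefer : ∀ I : Ideal R, I.FG → I ≠ ⊥ →
      (I : FractionalIdeal R⁰ K) * (I : FractionalIdeal R⁰ K)⁻¹ = 1)
    (X : Set (MaximalSpectrum R)) (hXne : X.Nonempty) (hX : @IsClosed _ (invTop R) X)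
    (T : Subalgebra R K)
    (hT : ∀ x : K, x ∈ T ↔ ∀ P ∈ X, ∃ r s : R, s ∉ P.asIdeal ∧
      algebraMap R K s * x = algebraMap R K r) :
    ∀ Q : Ideal T, Q.IsMaximal ↔ ∃ P ∈ X, Q = Ideal.map (algebraMap R T) P.asIdeal := by
  have hinj : Function.Injective (algebraMap R K) := IsFractionRing.injective R K
  have hcoe : ∀ r : R, ((algebraMap R T r : T) : K) = algebraMap R K r := fun _ => rfl
  have hTle : ∀ P ∈ X, ∀ t : T, ∃ r s : R, s ∉ P.asIdeal ∧
      algebraMap R K s * (t : K) = algebraMap R K r := fun P hP t => (hT t).mp t.2 P hP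
  -- Claim A : if s*t = r with s ∉ P, r ∈ P then t ∈ PT
  have claimA : ∀ P ∈ X, ∀ t : T, ∀ r s : R, s ∉ P.asIdeal → r ∈ P.asIdeal →
      algebraMap R K s * (t : K) = algebraMap R K r →
      t ∈ Ideal.map (algebraMap R T) P.asIdeal := by
    intro P hP t r s hs hr heq
    obtain ⟨u, p, hp, hups⟩ := P.isMaximal.exists_inv hs
    have h1 : algebraMap R K u * algebraMap R K s + algebraMap R K p = 1 := by
      rw [← map_mul, ← map_add, hups, map_one]
    have key : t = algebraMap R T (u * r) + algebraMap R T p * t := by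
      apply Subtype.ext
      push_cast [map_mul, map_add, hcoe]
      linear_combination (algebraMap R K u) * heq - (t : K) * h1
    rw [key]
    exact add_mem (Ideal.mem_map_of_mem _ (P.asIdeal.mul_mem_left u hr))
      (Ideal.mul_mem_right t _ (Ideal.mem_map_of_mem _ hp))
  -- 1 ∉ PT
  have notOne : ∀ P ∈ X, (1 : T) ∉ Ideal.map (algebraMap R T) P.asIdeal := by
    intro P hP h1
    have hone_ne : (1 : R) ∉ P.asIdeal := fun h =>
      P.isMaximal.ne_top ((Ideal.eq_top_iff_one _).mpr h)
    let J₀ : Ideal T :=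
    { carrier := {t : T | ∃ r s : R, r ∈ P.asIdeal ∧ s ∉ P.asIdeal ∧
        algebraMap R K s * (t : K) = algebraMap R K r}
      zero_mem' := ⟨0, 1, P.asIdeal.zero_mem, hone_ne, by simp⟩
      add_mem' := by
        rintro a b ⟨r1, s1, hr1, hs1, hh1⟩ ⟨r2, s2, hr2, hs2, hh2⟩
        refine ⟨s2 * r1 + s1 * r2, s1 * s2,
          add_mem (P.asIdeal.mul_mem_left _ hr1) (P.asIdeal.mul_mem_left _ hr2),
          fun h => ((P.isMaximal.isPrime.mem_or_mem h).elim hs1 hs2), ?_⟩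
        push_cast [map_mul, map_add]
        linear_combination (algebraMap R K s2) * hh1 + (algebraMap R K s1) * hh2
      smul_mem' := by
        intro c x hx
        obtain ⟨r, s, hr, hs, h⟩ := hx
        obtain ⟨r', s', hs', h'⟩ := hTle P hP c
        refine ⟨r' * r, s' * s, P.asIdeal.mul_mem_left _ hr,
          fun hm => ((P.isMaximal.isPrime.mem_or_mem hm).elim hs' hs), ?_⟩
        show algebraMap R K (s' * s) * ((c * x : T) : K) = algebraMap R K (r' * r)
        push_cast [map_mul]
        linear_combination (algebraMap R K s * (x : K)) * h' + (algebraMap R K r') * h }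
    have hle : Ideal.map (algebraMap R T) P.asIdeal ≤ J₀ :=
      Ideal.map_le_iff_le_comap.mpr (fun p hp => ⟨p, 1, hp, hone_ne, by simp [hcoe]⟩)
    obtain ⟨r, s, hr, hs, h⟩ := hle h1
    apply hs
    have hsr : s = r := hinj (by simpa using h)
    exact hsr ▸ hr
  -- PT is maximal for P ∈ X
  have maxMap : ∀ P ∈ X, (Ideal.map (algebraMap R T) P.asIdeal).IsMaximal := by
    intro P hP
    rw [Ideal.isMaximal_iff]
    refine ⟨notOne P hP, ?_⟩
    intro J x hle hx hxJ
    obtain ⟨r, s, hs, heq⟩ := hTle P hP x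
    have hr : r ∉ P.asIdeal := fun hr => hx (claimA P hP x r s hs hr heq)
    obtain ⟨v, p, hp, hvp⟩ := P.isMaximal.exists_inv hr
    have h1 : algebraMap R K v * algebraMap R K r + algebraMap R K p = 1 := by
      rw [← map_mul, ← map_add, hvp, map_one]
    have key : (1 : T) = algebraMap R T v * (algebraMap R T s * x) + algebraMap R T p := by
      apply Subtype.ext
      push_cast [hcoe]
      linear_combination (-(algebraMap R K v)) * heq - h1
    rw [key]
    exact add_mem (Ideal.mul_mem_left J _ (Ideal.mul_mem_left J _ hxJ))
      (hle (Ideal.mem_map_of_mem _ hp))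
  -- topology lemma
  have topo : ∀ U : Set (MaximalSpectrum R),
      TopologicalSpace.GenerateOpen {s | ∃ I : Ideal R, I.FG ∧ s = {M | I ≤ M.asIdeal}} U →
      ∀ M₀ ∈ U, ∃ I : Ideal R, I.FG ∧ I ≤ M₀.asIdeal ∧
        {N : MaximalSpectrum R | I ≤ N.asIdeal} ⊆ U := by
    intro U hU
    induction hU with
    | basic u hu =>
        obtain ⟨I, hfg, rfl⟩ := hu
        exact fun M hM => ⟨I, hfg, hM, fun _ hN => hN⟩
    | univ => exact fun M _ => ⟨⊥, Submodule.fg_bot, bot_le, fun _ _ => trivial⟩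
    | inter u v hu hv ihu ihv =>
        intro M hM
        obtain ⟨I, hI, hIle, hIsub⟩ := ihu M hM.1
        obtain ⟨J, hJ, hJle, hJsub⟩ := ihv M hM.2
        refine ⟨I ⊔ J, Submodule.FG.sup hI hJ, sup_le hIle hJle, fun N hN => ?_⟩
        have hN' : I ⊔ J ≤ N.asIdeal := hN
        exact ⟨hIsub (le_trans le_sup_left hN'), hJsub (le_trans le_sup_right hN')⟩
    | sUnion S hS ih =>
        rintro M ⟨u, huS, hMu⟩
        obtain ⟨I, h1, h2, h3⟩ := ih u huS M hMu
        exact ⟨I, h1, h2, fun N hN => ⟨u, huS, h3 hN⟩⟩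
  intro Q
  constructor
  · intro hQ
    by_cases hQbot : Q = ⊥
    · obtain ⟨P, hP⟩ := hXne
      refine ⟨P, hP, ?_⟩
      have hPbot : P.asIdeal = ⊥ := by
        by_contra hne
        obtain ⟨p, hp, hp0⟩ := (Submodule.ne_bot_iff _).mp hne
        have hTp : algebraMap R T p ≠ 0 := fun h => hp0 (hinj (by
          have h2 := congrArg (Subtype.val : T → K) h
          simpa [hcoe] using h2))
        have hspan : Ideal.span {algebraMap R T p} = ⊤ := by
          by_contra hne'
          have he : Q = Ideal.span {algebraMap R T p} :=
            hQ.eq_of_le hne' (hQbot ▸ bot_le)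
          have : algebraMap R T p ∈ Q := he ▸ Ideal.subset_span (Set.mem_singleton _)
          rw [hQbot, Ideal.mem_bot] at this
          exact hTp this
        obtain ⟨c, hc⟩ := Ideal.mem_span_singleton'.mp
          (show (1 : T) ∈ Ideal.span {algebraMap R T p} from hspan ▸ Submodule.mem_top)
        obtain ⟨r, s, hs, heq⟩ := hTle P hP c
        have hcK : (c : K) * algebraMap R K p = 1 := by
          have h2 := congrArg (Subtype.val : T → K) hc
          push_cast [hcoe] at h2
          exact h2
        apply hs
        have hKeq : algebraMap R K s = algebraMap R K (r * p) := by
          rw [map_mul]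
          linear_combination (algebraMap R K p) * heq - (algebraMap R K s) * hcK
        have hsrp : s = r * p := hinj hKeq
        rw [hsrp]
        exact P.asIdeal.mul_mem_left r hp
      rw [hQbot, hPbot, Ideal.map_bot]
    · set P₀ := Ideal.comap (algebraMap R T) Q with hP₀
      haveI := hQ.isPrime
      have hprime : P₀.IsPrime := Ideal.IsPrime.comap _
      have hP₀bot : P₀ ≠ ⊥ := by
        obtain ⟨t, htQ, ht0⟩ := (Submodule.ne_bot_iff Q).mp hQbot
        obtain ⟨⟨a, s⟩, hrs⟩ := IsLocalization.surj (M := R⁰) (t : K)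
        have hsK : algebraMap R K (s : R) ≠ 0 := fun h =>
          nonZeroDivisors.ne_zero s.2 (hinj (by rw [h, map_zero]))
        have htK : (t : K) ≠ 0 := fun h => ht0 (Subtype.ext h)
        have ha0 : a ≠ 0 := by
          intro h
          rw [h, map_zero] at hrs
          exact (mul_ne_zero htK hsK) hrs
        have haQ : algebraMap R T a ∈ Q := by
          have he : algebraMap R T a = algebraMap R T (s : R) * t := by
            apply Subtype.ext
            push_cast [hcoe]
            rw [← hrs]; ring
          rw [he]
          exact Ideal.mul_mem_left Q _ htQ
        intro h
        apply ha0
        have : a ∈ P₀ := Ideal.mem_comap.mpr haQ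
        rwa [h, Ideal.mem_bot] at this
      have hP₀max : P₀.IsMaximal := hdim P₀ hprime hP₀bot
      set M₀ : MaximalSpectrum R := ⟨P₀, hP₀max⟩ with hM₀def
      have hM₀X : M₀ ∈ X := by
        by_contra hn
        have hXc : TopologicalSpace.GenerateOpen
            {s | ∃ I : Ideal R, I.FG ∧ s = {M | I ≤ M.asIdeal}} Xᶜ := hX.isOpen_compl
        obtain ⟨I, hfg, hIle, hsub⟩ := topo Xᶜ hXc M₀ hn
        have hIM : ∀ M ∈ X, ¬ I ≤ M.asIdeal := fun M hM hle => (hsub hle) hM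
        have hIbot : I ≠ ⊥ := by
          obtain ⟨M₁, hM₁⟩ := hXne
          exact fun h => hIM M₁ hM₁ (h ▸ bot_le)
        have hmul := hpruefer I hfg hIbot
        have hIne : (I : FractionalIdeal R⁰ K) ≠ 0 :=
          fun h => hIbot (FractionalIdeal.coeIdeal_eq_zero.mp h)
        have h1 : (1 : K) ∈ ((I : FractionalIdeal R⁰ K) * (I : FractionalIdeal R⁰ K)⁻¹) := by
          rw [hmul]
          exact (FractionalIdeal.mem_one_iff R⁰).mpr ⟨1, map_one _⟩
        have h1' : (1 : K) ∈ ((I : FractionalIdeal R⁰ K) : Submodule R K) *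
            (((I : FractionalIdeal R⁰ K)⁻¹ : FractionalIdeal R⁰ K) : Submodule R K) := by
          rw [← FractionalIdeal.coe_mul]
          exact FractionalIdeal.mem_coe.mpr h1
        have main : ∃ t : T, t ∈ Ideal.map (algebraMap R T) I ∧ (t : K) = 1 := by
          refine Submodule.mul_induction_on h1' ?_ ?_
          · intro a ha b hb
            obtain ⟨i, hiI, rfl⟩ := (FractionalIdeal.mem_coeIdeal R⁰).mp
              (FractionalIdeal.mem_coe.mp ha)
            have hbinv : b ∈ ((I : FractionalIdeal R⁰ K))⁻¹ := FractionalIdeal.mem_coe.mp hb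
            have hbT : b ∈ T := by
              rw [hT]
              intro M hM
              obtain ⟨s, hsI, hsM⟩ := SetLike.not_le_iff_exists.mp (hIM M hM)
              have hmem := (FractionalIdeal.mem_inv_iff hIne).mp hbinv (algebraMap R K s)
                ((FractionalIdeal.mem_coeIdeal R⁰).mpr ⟨s, hsI, rfl⟩)
              obtain ⟨r, hr⟩ := (FractionalIdeal.mem_one_iff R⁰).mp hmem
              exact ⟨r, s, hsM, by rw [mul_comm]; exact hr.symm⟩
            refine ⟨algebraMap R T i * ⟨b, hbT⟩,
              Ideal.mul_mem_right _ _ (Ideal.mem_map_of_mem _ hiI), ?_⟩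
            push_cast [hcoe]
            ring
          · rintro x y ⟨t1, ht1, he1⟩ ⟨t2, ht2, he2⟩
            exact ⟨t1 + t2, add_mem ht1 ht2, by push_cast [he1, he2]; ring⟩
        obtain ⟨t, htI, ht1⟩ := main
        have ht : t = 1 := Subtype.ext ht1
        rw [ht] at htI
        have h1Q : (1 : T) ∈ Q :=
          (Ideal.map_le_iff_le_comap.mpr le_rfl) (Ideal.map_mono hIle htI)
        exact hQ.ne_top ((Q.eq_top_iff_one).mpr h1Q)
      exact ⟨M₀, hM₀X,
        ((maxMap M₀ hM₀X).eq_of_le hQ.ne_top (Ideal.map_le_iff_le_comap.mpr le_rfl)).symm⟩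
  · rintro ⟨P, hP, rfl⟩
    exact maxMap P hP
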